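/- Let M = M₁ × M₂ over R = R₁ × R₂ and S = S₁ × S₂. Then P₁ is a graded classical S₁-primary submodule of M₁ if and only if P₁ × M₂ is a graded classical S-primary submodule of M. -/

import Mathlib

section ProdModule

variable {R₁ R₂ M₁ M₂ : Type*} [CommRing R₁] [CommRing R₂]
  [AddCommGroup M₁] [AddCommGroup M₂] [Module R₁ M₁] [Module R₂ M₂]

/-- The componentwise scalar action of `R₁ × R₂` on `M₁ × M₂`. -/
instance Prod.instSMulProdProd : SMul (R₁ × R₂) (M₁ × M₂) :=
  ⟨fun p m => (p.1 • m.1, p.2 • m.2)⟩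

/-- `M₁ × M₂` is a module over `R₁ × R₂` componentwise. -/
instance Prod.instModuleProdProd : Module (R₁ × R₂) (M₁ × M₂) where
  one_smul m := Prod.ext (one_smul _ _) (one_smul _ _)
  mul_smul p q m := Prod.ext (mul_smul _ _ _) (mul_smul _ _ _)
  smul_zero p := Prod.ext (smul_zero _) (smul_zero _)
  smul_add p m n := Prod.ext (smul_add _ _ _) (smul_add _ _ _)
  add_smul p q m := Prod.ext (add_smul _ _ _) (add_smul _ _ _)
  zero_smul m := Prod.ext (zero_smul _ _) (zero_smul _ _)

/-- The product `P₁ × P₂` of submodules, as a submodule of the `R₁ × R₂`-module `M₁ × M₂`. -/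
def Submodule.prodProd (P₁ : Submodule R₁ M₁) (P₂ : Submodule R₂ M₂) :
    Submodule (R₁ × R₂) (M₁ × M₂) where
  carrier := (P₁ : Set M₁) ×ˢ (P₂ : Set M₂)
  add_mem' h h' := ⟨P₁.add_mem h.1 h'.1, P₂.add_mem h.2 h'.2⟩
  zero_mem' := ⟨P₁.zero_mem, P₂.zero_mem⟩
  smul_mem' c x h := ⟨P₁.smul_mem c.1 h.1, P₂.smul_mem c.2 h.2⟩

end ProdModule

/-- `P` is a classical `S`-primary submodule relative to the sets `hA`, `hN` of homogeneous
elements; this includes `(P :_A N) ∩ S = ∅`. -/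
def IsClSPrimaryOn {A N : Type*} [CommRing A] [AddCommGroup N] [Module A N]
    (hA : Set A) (hN : Set N) (S : Submonoid A) (P : Submodule A N) : Prop :=
  Disjoint ((P.colon ⊤ : Ideal A) : Set A) (S : Set A) ∧
    ∃ s ∈ S, ∀ x ∈ hA, ∀ y ∈ hA, ∀ m ∈ hN, (x * y) • m ∈ P →
      (s * x) • m ∈ P ∨ ∃ n : ℕ, 0 < n ∧ (s * y ^ n) • m ∈ P

variable {G : Type*} [AddCommGroup G] [DecidableEq G]
variable {R₁ : Type*} [CommRing R₁] (𝒜₁ : G → AddSubmonoid R₁) [GradedRing 𝒜₁]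
variable {R₂ : Type*} [CommRing R₂] (𝒜₂ : G → AddSubmonoid R₂) [GradedRing 𝒜₂]
variable {M₁ : Type*} [AddCommGroup M₁] [Module R₁ M₁]
variable (ℳ₁ : G → AddSubmonoid M₁) [SetLike.GradedSMul 𝒜₁ ℳ₁] [DirectSum.Decomposition ℳ₁]
variable {M₂ : Type*} [AddCommGroup M₂] [Module R₂ M₂]
variable (ℳ₂ : G → AddSubmonoid M₂) [SetLike.GradedSMul 𝒜₂ ℳ₂] [DirectSum.Decomposition ℳ₂]

/-- `P` is a graded submodule. -/
def IsGradedSubmodule {R M : Type*} [CommRing R] [AddCommGroup M] [Module R M]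
    (ℳ : G → AddSubmonoid M) [DirectSum.Decomposition ℳ] (P : Submodule R M) : Prop :=
  ∀ m ∈ P, ∀ g : G, (DirectSum.decompose ℳ m g : M) ∈ P

/-- for `M = M₁ × M₂` over `R = R₁ × R₂` and `S = S₁ × S₂`, `P₁` is a graded
classical `S₁`-primary submodule of `M₁` iff `P₁ × M₂` is a graded classical `S`-primary
submodule of `M`. -/
theorem prodTop_isClSPrimary_iff (S₁ : Submonoid R₁) (S₂ : Submonoid R₂)
    (hS₁ : (S₁ : Set R₁) ⊆ {r | SetLike.IsHomogeneousElem 𝒜₁ r})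
    (hS₂ : (S₂ : Set R₂) ⊆ {r | SetLike.IsHomogeneousElem 𝒜₂ r})
    (P₁ : Submodule R₁ M₁) (hP₁ : IsGradedSubmodule ℳ₁ P₁) :
    IsClSPrimaryOn {r | SetLike.IsHomogeneousElem 𝒜₁ r} {m | SetLike.IsHomogeneousElem ℳ₁ m} S₁ P₁ ↔
      IsClSPrimaryOn {p : R₁ × R₂ | ∃ g : G, p.1 ∈ 𝒜₁ g ∧ p.2 ∈ 𝒜₂ g}
        {m : M₁ × M₂ | ∃ g : G, m.1 ∈ ℳ₁ g ∧ m.2 ∈ ℳ₂ g}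
        (S₁.prod S₂) (P₁.prodProd (⊤ : Submodule R₂ M₂)) := by
  constructor
  · rintro ⟨hdisj, s₁, hs₁, hprim⟩
    constructor
    · rw [Set.disjoint_left] at hdisj ⊢
      rintro ⟨r₁, r₂⟩ hr hrS
      refine hdisj (a := r₁) ?_ hrS.1
      simp only [SetLike.mem_coe, Submodule.mem_colon] at hr ⊢
      intro m₁ _
      exact (hr (m₁, 0) trivial).1
    · refine ⟨(s₁, 1), ⟨hs₁, one_mem _⟩, ?_⟩
      rintro ⟨x₁, x₂⟩ ⟨gx, hx1, hx2⟩ ⟨y₁, y₂⟩ ⟨gy, hy1, hy2⟩ ⟨m₁, m₂⟩ ⟨gm, hm1, hm2⟩ hxy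
      rcases hprim x₁ ⟨gx, hx1⟩ y₁ ⟨gy, hy1⟩ m₁ ⟨gm, hm1⟩ hxy.1 with h | ⟨n, hn, h⟩
      · exact Or.inl ⟨h, Submodule.mem_top⟩
      · exact Or.inr ⟨n, hn, h, Submodule.mem_top⟩
  · rintro ⟨hdisj, ⟨s₁, s₂⟩, hs, hprim⟩
    constructor
    · rw [Set.disjoint_left] at hdisj ⊢
      intro r₁ hr hrS
      refine hdisj (a := (r₁, s₂)) ?_ ⟨hrS, hs.2⟩
      simp only [SetLike.mem_coe, Submodule.mem_colon] at hr ⊢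
      rintro ⟨m₁, m₂⟩ _
      exact ⟨hr m₁ trivial, Submodule.mem_top⟩
    · refine ⟨s₁, hs.1, ?_⟩
      rintro x ⟨gx, hx⟩ y ⟨gy, hy⟩ m ⟨gm, hm⟩ hxy
      rcases hprim (x, 0) ⟨gx, hx, zero_mem _⟩ (y, 0) ⟨gy, hy, zero_mem _⟩ (m, 0)
          ⟨gm, hm, zero_mem _⟩ ⟨hxy, Submodule.mem_top⟩ with h | ⟨n, hn, h⟩
      · exact Or.inl h.1
      · refine Or.inr ⟨n, hn, ?_⟩
        have := h.1
        exact (by simpa [Prod.pow_fst] using this : ((s₁ * y ^ n, s₂ * 0 ^ n) • (m, (0 : M₂))).1 ∈ P₁)
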